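/- arXiv:math/0310375 — 2 statements merged into one kernel-verified Lean document; each statement's English description precedes it below -/
import Mathlib

section
/- Let (V, ω) be a symplectic vector space of dimension 2n, r a symmetric bilinear form with associated endomorphism ρ (ω(X,ρY)=r(X,Y)), and define the curvature endomorphism R(X,Y)Z = -(1/(2(n+1)))[-2ω(X,Y) ρZ - ω(X,Z) ρY + ω(Y,Z) ρX - ω(ρY,Z) X + ω(ρX,Z) Y]. Then the Ricci tensor of R, defined by ric(X,Z) = tr(Y ↦ R(X,Y)Z), equals r. -/
open LinearMap Module

lemma trace_smulRight'' {V : Type*} [AddCommGroup V] [Module ℝ V] [FiniteDimensional ℝ V]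
    (f : V →ₗ[ℝ] ℝ) (v : V) : LinearMap.trace ℝ V (f.smulRight v) = f v := by
  have h : f.smulRight v = dualTensorHom ℝ V V (f ⊗ₜ v) := by ext x; rfl
  rw [h, trace_eq_contract_apply, contractLeft_apply]

lemma trace_rho_zero {V : Type*} [AddCommGroup V] [Module ℝ V] [FiniteDimensional ℝ V]
    (ω : V →ₗ[ℝ] V →ₗ[ℝ] ℝ) (halt : ∀ x, ω x x = 0)
    (hnd : ∀ x, (∀ y, ω x y = 0) → x = 0)
    (r : V →ₗ[ℝ] V →ₗ[ℝ] ℝ) (hsymm : ∀ x y, r x y = r y x)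
    (ρ : V →ₗ[ℝ] V) (hρ : ∀ x y, ω x (ρ y) = r x y) :
    LinearMap.trace ℝ V ρ = 0 := by
  have hskew : ∀ x y, ω x y = -ω y x := by
    intro x y
    have h := halt (x + y)
    simp only [map_add, LinearMap.add_apply, halt] at h
    linarith
  have hinj : Function.Injective ω := by
    rw [← LinearMap.ker_eq_bot, LinearMap.ker_eq_bot']
    intro x hx
    exact hnd x fun y => by rw [hx]; rfl
  have hsurj : Function.Surjective ω :=
    (LinearMap.injective_iff_surjective_of_finrank_eq_finrank
      (Subspace.dual_finrank_eq (K := ℝ) (V := V)).symm).mp hinj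
  let B : V ≃ₗ[ℝ] Module.Dual ℝ V := LinearEquiv.ofBijective ω ⟨hinj, hsurj⟩
  have hB : ∀ x, B x = ω x := fun _ => rfl
  have hconj : B.symm.conj (Module.Dual.transpose (R := ℝ) ρ) = -ρ := by
    ext x
    rw [LinearEquiv.conj_apply]
    simp only [LinearMap.comp_apply, LinearEquiv.coe_coe, LinearEquiv.symm_symm,
      LinearMap.neg_apply]
    apply hinj
    have h1 : ω (B.symm ((Module.Dual.transpose (R := ℝ) ρ) (B x)))
        = (Module.Dual.transpose (R := ℝ) ρ) (B x) := by
      rw [← hB, B.apply_symm_apply]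
    rw [h1]
    ext y
    show (B x) (ρ y) = ω (-ρ x) y
    rw [hB, hρ, map_neg, LinearMap.neg_apply, ← hskew, hρ, hsymm]
  have h2 := LinearMap.trace_conj' (Module.Dual.transpose (R := ℝ) ρ) B.symm
  rw [hconj, LinearMap.trace_transpose', map_neg] at h2
  linarith
/-- The Ricci contraction ric(X,Z) = tr(Y ↦ R(X,Y)Z) of the Ricci-type curvature
endomorphism R built from ω and ρ equals the symmetric bilinear form r. -/
theorem stmt_3 {V : Type*} [AddCommGroup V] [Module ℝ V] [FiniteDimensional ℝ V]
    (n : ℕ) (hn : 1 ≤ n) (hdim : Module.finrank ℝ V = 2 * n)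
    (ω : V →ₗ[ℝ] V →ₗ[ℝ] ℝ)
    (halt : ∀ x, ω x x = 0)
    (hnd : ∀ x, (∀ y, ω x y = 0) → x = 0)
    (r : V →ₗ[ℝ] V →ₗ[ℝ] ℝ)
    (hsymm : ∀ x y, r x y = r y x)
    (ρ : V →ₗ[ℝ] V)
    (hρ : ∀ x y, ω x (ρ y) = r x y)
    (R : V →ₗ[ℝ] V →ₗ[ℝ] V →ₗ[ℝ] V)
    (hR : ∀ X Y Z, R X Y Z =
      (-(1 / (2 * ((n : ℝ) + 1)))) •
        ((-(2 * ω X Y)) • ρ Z - ω X Z • ρ Y + ω Y Z • ρ X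
          - ω (ρ Y) Z • X + ω (ρ X) Z • Y)) :
    ∀ X Z, LinearMap.trace ℝ V ((LinearMap.applyₗ Z).comp (R X)) = r X Z := by
  intro X Z
  have hskew : ∀ x y, ω x y = -ω y x := by
    intro x y
    have h := halt (x + y)
    simp only [map_add, LinearMap.add_apply, halt] at h
    linarith
  have hT : (LinearMap.applyₗ Z).comp (R X) =
      (-(1 / (2 * ((n : ℝ) + 1)))) •
        ((-2 : ℝ) • ((ω X).smulRight (ρ Z)) - ω X Z • ρ
          + ((ω.flip Z).smulRight (ρ X))
          - (((ω.flip Z).comp ρ).smulRight X)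
          + ω (ρ X) Z • LinearMap.id) := by
    ext Y
    show ((R X) Y) Z = _
    rw [hR]
    simp only [LinearMap.smul_apply, LinearMap.sub_apply, LinearMap.add_apply,
      LinearMap.smulRight_apply, LinearMap.flip_apply, LinearMap.id_apply,
      LinearMap.comp_apply]
    module
  rw [hT, map_smul, map_add, map_sub, map_add, map_sub, map_smul, map_smul, map_smul,
    trace_smulRight'', trace_smulRight'', trace_smulRight'',
    trace_rho_zero ω halt hnd r hsymm ρ hρ, LinearMap.trace_id, hdim]
  simp only [LinearMap.flip_apply, LinearMap.comp_apply, hρ, smul_eq_mul]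
  have hω : ω (ρ X) Z = -(r X Z) := by rw [hskew, hρ, hsymm]
  rw [hω]
  have hne : (2 : ℝ) * ((n : ℝ) + 1) ≠ 0 := by positivity
  field_simp
  push_cast
  ring
end

section
/- With k > 0, consider on R^{n+1} × R^{n+1} the set Σ = {(u,v) : -2k (u·v) = 1} and TS^n = {(u',v') : u'·u' = 1, u'·v' = 0}. The map π(u,v) = (u/‖u‖, ‖u‖(v + u/(2k‖u‖²))) is a well-defined surjection from Σ onto TS^n, and π(u,v) = π(u₁,v₁) if and only if (u₁,v₁) = (e^{kt}u, e^{-kt}v) for some t ∈ R. -/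
/-- The map π(u,v) = (u/‖u‖, ‖u‖(v + u/(2k‖u‖²))) maps Σ = {-2k(u·v) = 1} onto
TS^n = {u'·u' = 1, u'·v' = 0}, and identifies exactly the orbits
(u,v) ↦ (e^{kt}u, e^{-kt}v). -/
theorem stmt_12 (n : ℕ) (k : ℝ) (hk : 0 < k)
    (f : (EuclideanSpace ℝ (Fin (n + 1))) × (EuclideanSpace ℝ (Fin (n + 1))) →
      (EuclideanSpace ℝ (Fin (n + 1))) × (EuclideanSpace ℝ (Fin (n + 1))))
    (hf : ∀ u v, f (u, v) = (‖u‖⁻¹ • u, ‖u‖ • (v + (2 * k * ‖u‖ ^ 2)⁻¹ • u))) :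
    (∀ p : (EuclideanSpace ℝ (Fin (n + 1))) × (EuclideanSpace ℝ (Fin (n + 1))),
      -(2 * k) * (inner ℝ p.1 p.2 : ℝ) = 1 →
        (inner ℝ (f p).1 (f p).1 : ℝ) = 1 ∧ (inner ℝ (f p).1 (f p).2 : ℝ) = 0) ∧
    (∀ q : (EuclideanSpace ℝ (Fin (n + 1))) × (EuclideanSpace ℝ (Fin (n + 1))),
      (inner ℝ q.1 q.1 : ℝ) = 1 → (inner ℝ q.1 q.2 : ℝ) = 0 →
        ∃ p, -(2 * k) * (inner ℝ p.1 p.2 : ℝ) = 1 ∧ f p = q) ∧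
    (∀ p p' : (EuclideanSpace ℝ (Fin (n + 1))) × (EuclideanSpace ℝ (Fin (n + 1))),
      -(2 * k) * (inner ℝ p.1 p.2 : ℝ) = 1 → -(2 * k) * (inner ℝ p'.1 p'.2 : ℝ) = 1 →
        (f p = f p' ↔
          ∃ t : ℝ, p'.1 = Real.exp (k * t) • p.1 ∧ p'.2 = Real.exp (-(k * t)) • p.2)) := by
  have key : ∀ (u v : EuclideanSpace ℝ (Fin (n + 1))),
      -(2 * k) * (inner ℝ u v : ℝ) = 1 → u ≠ 0 := by
    intro u v h hu
    simp [hu] at h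
  refine ⟨?_, ?_, ?_⟩
  · rintro ⟨u, v⟩ h
    have hu : u ≠ 0 := key u v h
    have hnu : ‖u‖ ≠ 0 := norm_ne_zero_iff.mpr hu
    have huv : (inner ℝ u v : ℝ) = -(2*k)⁻¹ := by
      field_simp at h ⊢; linarith
    rw [hf]
    constructor
    · show (inner ℝ (‖u‖⁻¹ • u) (‖u‖⁻¹ • u) : ℝ) = 1
      rw [real_inner_smul_left, real_inner_smul_right, real_inner_self_eq_norm_sq, pow_two]
      field_simp
    · show (inner ℝ (‖u‖⁻¹ • u) (‖u‖ • (v + (2 * k * ‖u‖ ^ 2)⁻¹ • u)) : ℝ) = 0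
      rw [real_inner_smul_left, real_inner_smul_right, inner_add_right,
        real_inner_smul_right, real_inner_self_eq_norm_sq, huv]
      field_simp
      ring
  · rintro ⟨q1, q2⟩ h1 h2
    have hn : ‖q1‖ = 1 := by
      have := real_inner_self_eq_norm_sq q1
      rw [h1] at this
      nlinarith [norm_nonneg q1]
    refine ⟨(q1, q2 - (2*k)⁻¹ • q1), ?_, ?_⟩
    · simp only [inner_sub_right, real_inner_smul_right, h1, h2]
      field_simp; ring
    · rw [hf, hn]
      simp only [inv_one, one_smul, one_pow, mul_one]
      refine Prod.ext rfl ?_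
      simp only []
      module
  · rintro ⟨u, v⟩ ⟨u', v'⟩ h h'
    have hu : u ≠ 0 := key u v h
    have hu' : u' ≠ 0 := key u' v' h'
    have hnu : ‖u‖ ≠ 0 := norm_ne_zero_iff.mpr hu
    have hnup : (0:ℝ) < ‖u‖ := norm_pos_iff.mpr hu
    simp only [hf, Prod.mk.injEq]
    constructor
    · rintro ⟨e1, e2⟩
      obtain ⟨b, hb⟩ : ∃ b : ℝ, ‖u'‖ = b := ⟨_, rfl⟩
      have hbpos : (0:ℝ) < b := hb ▸ norm_pos_iff.mpr hu'
      have hbne : b ≠ 0 := hbpos.ne'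
      rw [hb] at e1 e2
      have hu'eq : u' = (b * ‖u‖⁻¹) • u := by
        have h1 : b • (b⁻¹ • u') = b • (‖u‖⁻¹ • u) := by rw [e1]
        rw [smul_smul, smul_smul, mul_inv_cancel₀ hbne, one_smul] at h1
        exact h1
      have hlpos : 0 < b / ‖u‖ := div_pos hbpos hnup
      refine ⟨Real.log (b / ‖u‖) / k, ?_, ?_⟩
      · rw [mul_div_cancel₀ _ hk.ne', Real.exp_log hlpos, div_eq_mul_inv]
        exact hu'eq
      · rw [mul_div_cancel₀ _ hk.ne', Real.exp_neg, Real.exp_log hlpos]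
        rw [hu'eq] at e2
        rw [smul_add, smul_add] at e2
        simp only [smul_smul] at e2
        rw [show ‖u‖ * (2 * k * ‖u‖ ^ 2)⁻¹ = (2 * k * ‖u‖)⁻¹ by
          field_simp] at e2
        rw [show b * ((2 * k * b ^ 2)⁻¹ * (b * ‖u‖⁻¹)) = (2 * k * ‖u‖)⁻¹ by
          field_simp] at e2
        have e3 : ‖u‖ • v = b • v' := add_right_cancel e2
        have e4 : v' = (b⁻¹ * ‖u‖) • v := by
          rw [← smul_smul, e3, smul_smul, inv_mul_cancel₀ hbne, one_smul]
        rw [e4]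
        congr 1
        rw [div_eq_mul_inv, mul_inv, inv_inv, mul_comm]
    · rintro ⟨t, ht1, ht2⟩
      have hepos : (0:ℝ) < Real.exp (k * t) := Real.exp_pos _
      have hene : Real.exp (k * t) ≠ 0 := hepos.ne'
      constructor
      · rw [ht1, norm_smul, Real.norm_eq_abs, abs_of_pos hepos, smul_smul]
        congr 1
        field_simp
      · rw [ht1, ht2, norm_smul, Real.norm_eq_abs, abs_of_pos hepos, Real.exp_neg]
        match_scalars <;> field_simp <;> ring
end
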